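/- Let n, N, m be positive integers with n + 1 ≤ N, and let Δ ∈ ℝ^m be such that for every positive integer k there exists an index i with Int.fract(k·Δ_i/(2N)) ∈ [0, n/N]. Let R = {a ∈ ℤ^m : a_1·Δ_1 + … + a_m·Δ_m ∈ 2N·ℤ} and suppose R is generated by a single vector a₀ ∈ ℤ^m (i.e., R = ℤ·a₀) which has at least one strictly positive component. Then every component of a₀ is non-negative: (a₀)_i ≥ 0 for all i. -/

import Mathlib

open Finset Complex


noncomputable def ee (t : ℝ) : ℂ := Complex.exp (2 * Real.pi * Complex.I * t)

lemma ee_add (a b : ℝ) : ee (a + b) = ee a * ee b := by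
  rw [ee, ee, ee, ← Complex.exp_add]; push_cast; ring_nf

lemma ee_zero : ee 0 = 1 := by simp [ee]

lemma ee_int (z : ℤ) : ee z = 1 := by
  rw [ee, show 2 * (Real.pi : ℂ) * Complex.I * ((z:ℤ) : ℝ) = (z : ℂ) * (2 * Real.pi * Complex.I) by push_cast; ring]
  exact Complex.exp_int_mul_two_pi_mul_I z

lemma ee_abs (t : ℝ) : ‖ee t‖ = 1 := by
  rw [ee, Complex.norm_exp]; simp

lemma ee_norm (t : ℝ) : ‖ee t‖ = 1 := ee_abs t

lemma ee_ne_zero (t : ℝ) : ee t ≠ 0 := by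
  intro hc
  have := ee_abs t
  rw [hc] at this; simp at this

lemma ee_conj (t : ℝ) : (starRingEnd ℂ) (ee t) = ee (-t) := by
  rw [ee, ← Complex.exp_conj]
  congr 1
  rw [map_mul, map_mul, map_mul, Complex.conj_I, map_ofNat]
  push_cast
  rw [Complex.conj_ofReal, Complex.conj_ofReal]
  ring

lemma ee_sum {α : Type*} (s : Finset α) (f : α → ℝ) :
    ee (∑ i ∈ s, f i) = ∏ i ∈ s, ee (f i) := by
  classical
  induction s using Finset.induction with
  | empty => simp [ee_zero]
  | insert _ _ h ih => rw [Finset.sum_insert h, Finset.prod_insert h, ee_add, ih]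

lemma ee_nat_mul (k : ℕ) (t : ℝ) : ee (k * t) = ee t ^ k := by
  rw [ee, ee]
  push_cast
  rw [show 2 * (Real.pi:ℂ) * Complex.I * ((k:ℂ) * (t:ℂ)) = (k:ℂ) * (2 * Real.pi * Complex.I * t) by ring]
  exact Complex.exp_nat_mul _ k

lemma ee_eq_one_iff (t : ℝ) : ee t = 1 ↔ ∃ z : ℤ, t = (z : ℝ) := by
  rw [ee, Complex.exp_eq_one_iff]
  constructor
  · rintro ⟨z, hz⟩
    have h2 : (2 * (Real.pi:ℂ) * Complex.I) ≠ 0 := by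
      simp [Complex.I_ne_zero, Real.pi_ne_zero]
    have h3 : (2 * (Real.pi:ℂ) * Complex.I) * t = (2 * Real.pi * Complex.I) * z := by
      rw [hz]; ring
    have := mul_left_cancel₀ h2 h3
    exact ⟨z, by exact_mod_cast this⟩
  · rintro ⟨z, rfl⟩
    exact ⟨z, by push_cast; ring⟩

lemma ee_re (t : ℝ) : (ee t).re = Real.cos (2 * Real.pi * t) := by
  rw [ee, show 2 * (Real.pi:ℂ) * Complex.I * (t:ℝ) = ((2 * Real.pi * t : ℝ) : ℂ) * Complex.I by push_cast; ring]
  exact Complex.exp_ofReal_mul_I_re _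

lemma ee_im (t : ℝ) : (ee t).im = Real.sin (2 * Real.pi * t) := by
  rw [ee, show 2 * (Real.pi:ℂ) * Complex.I * (t:ℝ) = ((2 * Real.pi * t : ℝ) : ℂ) * Complex.I by push_cast; ring]
  exact Complex.exp_ofReal_mul_I_im _

lemma ee_fract (t : ℝ) : ee (Int.fract t) = ee t := by
  conv_rhs => rw [show t = Int.fract t + (⌊t⌋ : ℝ) by rw [Int.fract]; ring]
  rw [ee_add, ee_int, mul_one]

/-- chord-length lower bound -/
lemma ee_sub_one_lower {δ u : ℝ} (hδ : 0 < δ)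
    (h1 : δ ≤ Int.fract u) (h2 : Int.fract u ≤ 1 - δ) : 2 * δ ≤ ‖ee u - 1‖ := by
  set w := Int.fract u with hw
  have hsq : Complex.normSq (ee w - 1) = 2 - 2 * Real.cos (2 * Real.pi * w) := by
    rw [Complex.normSq_apply]
    simp only [Complex.sub_re, Complex.sub_im, Complex.one_re, Complex.one_im, ee_re, ee_im]
    nlinarith [Real.sin_sq_add_cos_sq (2 * Real.pi * w)]
  have hwhalf : Real.cos (2 * Real.pi * w) ≤ 1 - 4 * δ ^ 2 := by
    have hpi := Real.pi_gt_three
    rcases le_or_gt w (1/2) with hc | hc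
    · have hx : |2 * Real.pi * w| ≤ Real.pi := by
        rw [_root_.abs_of_nonneg (by nlinarith [Int.fract_nonneg u])]; nlinarith
      have := Real.cos_le_one_sub_mul_cos_sq hx
      have h4 : 2 / Real.pi ^ 2 * (2 * Real.pi * w) ^ 2 = 8 * w ^ 2 := by
        field_simp; ring
      rw [h4] at this
      nlinarith
    · have hcos : Real.cos (2 * Real.pi * w) = Real.cos (2 * Real.pi * (1 - w)) := by
        rw [show 2 * Real.pi * (1 - w) = 2 * Real.pi - 2 * Real.pi * w by ring,
          Real.cos_two_pi_sub]
      have hx : |2 * Real.pi * (1 - w)| ≤ Real.pi := by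
        rw [_root_.abs_of_nonneg (by nlinarith)]; nlinarith
      have := Real.cos_le_one_sub_mul_cos_sq hx
      have h4 : 2 / Real.pi ^ 2 * (2 * Real.pi * (1 - w)) ^ 2 = 8 * (1 - w) ^ 2 := by
        field_simp; ring
      rw [h4] at this
      nlinarith
  have hnorm : (2 * δ) ^ 2 ≤ ‖ee w - 1‖ ^ 2 := by
    rw [Complex.sq_norm, hsq]; nlinarith
  have := norm_nonneg (ee w - 1)
  have h2δ : 0 ≤ 2 * δ := by positivity
  rw [← ee_fract u, ← hw]
  nlinarith

noncomputable def Dd (r : ℕ) (t : ℝ) : ℂ := ∑ j ∈ Finset.range r, ee t ^ j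

lemma Dd_norm_le (r : ℕ) (t : ℝ) : ‖Dd r t‖ ≤ r := by
  calc ‖Dd r t‖ ≤ ∑ j ∈ Finset.range r, ‖ee t ^ j‖ := norm_sum_le _ _
  _ = r := by simp [norm_pow, show ∀ t, ‖ee t‖ = 1 from ee_norm]

lemma Dd_norm_le_of_ne (r : ℕ) (t : ℝ) (h : ee t ≠ 1) :
    ‖Dd r t‖ ≤ 2 / ‖ee t - 1‖ := by
  have hne : ee t - 1 ≠ 0 := sub_ne_zero.mpr h
  rw [Dd, geom_sum_eq h, norm_div]
  gcongr
  calc ‖ee t ^ r - 1‖ ≤ ‖ee t ^ r‖ + ‖(1:ℂ)‖ := norm_sub_le _ _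
  _ = 2 := by simp [norm_pow, show ∀ t, ‖ee t‖ = 1 from ee_norm]; norm_num


lemma count_lower (r s : ℕ) (hr : 1 ≤ r) (hs : 1 ≤ s) :
    r ^ (2 * s) ≤ s * r *
      (((Fintype.piFinset (fun _ : Fin s => Finset.range r)) ×ˢ
        (Fintype.piFinset (fun _ : Fin s => Finset.range r))).filter
        (fun p => ∑ u, p.1 u = ∑ u, p.2 u)).card := by
  classical
  set Fs := Fintype.piFinset (fun _ : Fin s => Finset.range r) with hFs
  set Q := ((Fs ×ˢ Fs).filter (fun p => ∑ u, p.1 u = ∑ u, p.2 u)) with hQ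
  set T := Finset.range (s * (r - 1) + 1) with hT
  set Nb : ℕ → ℕ := fun b => (Fs.filter (fun f => ∑ u, f u = b)).card with hNb
  have hmem : ∀ f ∈ Fs, (∑ u, f u) ∈ T := by
    intro f hf
    rw [hT, Finset.mem_range, Nat.lt_succ_iff]
    calc ∑ u, f u ≤ ∑ _u : Fin s, (r - 1) :=
          Finset.sum_le_sum (fun u _ => Nat.le_pred_of_lt
            (Finset.mem_range.mp (Fintype.mem_piFinset.mp hf u)))
    _ = s * (r - 1) := by simp [mul_comm]
  have hcardFs : Fs.card = r ^ s := by
    rw [hFs, Fintype.card_piFinset]; simp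
  have h1 : Fs.card = ∑ b ∈ T, Nb b := Finset.card_eq_sum_card_fiberwise hmem
  have h2 : Q.card = ∑ b ∈ T, (Nb b) ^ 2 := by
    have hmem2 : ∀ p ∈ Q, (∑ u, p.1 u) ∈ T := by
      intro p hp
      rw [hQ, Finset.mem_filter, Finset.mem_product] at hp
      exact hmem p.1 hp.1.1
    rw [Finset.card_eq_sum_card_fiberwise hmem2]
    apply Finset.sum_congr rfl
    intro b _
    have heq : Q.filter (fun p => ∑ u, p.1 u = b)
        = (Fs.filter (fun f => ∑ u, f u = b)) ×ˢ (Fs.filter (fun f => ∑ u, f u = b)) := by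
      ext p
      simp only [hQ, Finset.mem_filter, Finset.mem_product]
      constructor
      · rintro ⟨⟨⟨hp1, hp2⟩, hsum⟩, hb⟩
        exact ⟨⟨hp1, hb⟩, ⟨hp2, by omega⟩⟩
      · rintro ⟨⟨hp1, hb1⟩, ⟨hp2, hb2⟩⟩
        exact ⟨⟨⟨hp1, hp2⟩, by omega⟩, hb1⟩
    rw [heq, Finset.card_product, sq]
  have hCS : (∑ b ∈ T, Nb b) ^ 2 ≤ T.card * ∑ b ∈ T, (Nb b) ^ 2 :=
    sq_sum_le_card_mul_sum_sq
  have hTcard : T.card ≤ s * r := by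
    rw [hT, Finset.card_range]
    have : s * (r - 1) + s ≤ s * r := by
      rw [← Nat.mul_succ]
      exact Nat.mul_le_mul_left s (by omega)
    omega
  calc r ^ (2 * s) = (r ^ s) ^ 2 := by rw [← pow_mul, mul_comm]
  _ = (∑ b ∈ T, Nb b) ^ 2 := by rw [← h1, hcardFs]
  _ ≤ T.card * ∑ b ∈ T, (Nb b) ^ 2 := hCS
  _ = T.card * Q.card := by rw [h2]
  _ ≤ s * r * Q.card := Nat.mul_le_mul_right _ hTcard

lemma Dd_pow_expand (r s : ℕ) (t : ℝ) :
    Dd r t ^ s = ∑ f ∈ Fintype.piFinset (fun _ : Fin s => Finset.range r),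
      ee ((∑ u, (f u : ℝ)) * t) := by
  have h1 : Dd r t ^ s = ∏ _u : Fin s, (∑ j ∈ Finset.range r, ee ((j:ℝ) * t)) := by
    rw [Finset.prod_const, Finset.card_univ, Fintype.card_fin]
    congr 1
    rw [Dd]
    exact Finset.sum_congr rfl (fun j _ => (ee_nat_mul j t).symm)
  rw [h1, Finset.prod_univ_sum]
  apply Finset.sum_congr rfl
  intro f _
  rw [← ee_sum]
  congr 1
  rw [Finset.sum_mul]

lemma Dd_conj_pow_expand (r s : ℕ) (t : ℝ) :
    ((starRingEnd ℂ) (Dd r t)) ^ s = ∑ f ∈ Fintype.piFinset (fun _ : Fin s => Finset.range r),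
      ee (-((∑ u, (f u : ℝ)) * t)) := by
  have h1 : (starRingEnd ℂ) (Dd r t) = Dd r (-t) := by
    rw [Dd, map_sum, Dd]
    apply Finset.sum_congr rfl
    intro j _
    rw [map_pow, ee_conj]
  rw [h1, Dd_pow_expand]
  apply Finset.sum_congr rfl
  intro f _
  congr 1
  ring

lemma expand1 (r s : ℕ) (t : ℝ) :
    ((Complex.normSq (Dd r t) ^ s : ℝ) : ℂ)
      = ∑ p ∈ (Fintype.piFinset (fun _ : Fin s => Finset.range r)) ×ˢ
              (Fintype.piFinset (fun _ : Fin s => Finset.range r)),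
          ee (((∑ u, (p.1 u : ℝ)) - ∑ u, (p.2 u : ℝ)) * t) := by
  have h0 : ((Complex.normSq (Dd r t) ^ s : ℝ) : ℂ)
      = Dd r t ^ s * ((starRingEnd ℂ) (Dd r t)) ^ s := by
    push_cast
    rw [← Complex.mul_conj, mul_pow]
  rw [h0, Dd_pow_expand, Dd_conj_pow_expand, Finset.sum_mul_sum, ← Finset.sum_product']
  apply Finset.sum_congr rfl
  intro p _
  rw [← ee_add]
  congr 1
  ring

lemma core (m : ℕ) (hm : 0 < m) (θ v : Fin m → ℝ) (δ : ℝ) (hδ : 0 < δ) (hδ2 : δ ≤ 1/4)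
    (HA : ∀ b : Fin m → ℤ, (∃ z : ℤ, ∑ i, (b i : ℝ) * θ i = z) →
        (∃ z : ℤ, ∑ i, (b i : ℝ) * v i = z))
    (HB : ∀ k : ℕ, 0 < k → ∃ i, δ ≤ Int.fract ((k:ℝ) * θ i - v i) ∧
        Int.fract ((k:ℝ) * θ i - v i) ≤ 1 - δ) :
    False := by
  classical
  -- choose r
  obtain ⟨r, hrbig⟩ := exists_nat_gt ((m : ℝ) / δ ^ 2)
  have hmr : (0:ℝ) < (m:ℝ) / δ ^ 2 := by positivity
  have hr1 : 1 ≤ r := by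
    by_contra hc
    interval_cases r
    · simp at hrbig; linarith
  -- basic sets
  set Fs := Fintype.piFinset (fun _ : Fin m => Finset.range r) with hFs
  set Q₀ := Fs ×ˢ Fs with hQ₀
  set Q := Q₀.filter (fun p => ∑ u, p.1 u = ∑ u, p.2 u) with hQdef
  set Big := Fintype.piFinset (fun _ : Fin m => Q₀) with hBig
  set Bc : ((Fin m → ℕ) × (Fin m → ℕ)) → ℝ :=
    fun p => (∑ u, (p.1 u : ℝ)) - ∑ u, (p.2 u : ℝ) with hBc
  set μf : (Fin m → ((Fin m → ℕ) × (Fin m → ℕ))) → ℝ := fun τ => ∑ i, Bc (τ i) * θ i with hμf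
  set νf : (Fin m → ((Fin m → ℕ) × (Fin m → ℕ))) → ℝ := fun τ => ∑ i, Bc (τ i) * v i with hνf
  set F : ℕ → ℝ := fun k => ∏ i, (Complex.normSq (Dd r ((k:ℝ) * θ i - v i))) ^ m with hF
  -- identity 2
  have Id2 : ∀ k : ℕ, ((F k : ℝ) : ℂ) = ∑ τ ∈ Big, ee (μf τ) ^ k * ee (- νf τ) := by
    intro k
    have : ((F k : ℝ) : ℂ) = ∏ i, ((Complex.normSq (Dd r ((k:ℝ) * θ i - v i)) ^ m : ℝ) : ℂ) := by
      rw [hF]; push_cast; rfl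
    rw [this]
    have : ∀ i : Fin m, ((Complex.normSq (Dd r ((k:ℝ) * θ i - v i)) ^ m : ℝ) : ℂ)
        = ∑ p ∈ Q₀, ee (Bc p * ((k:ℝ) * θ i - v i)) := fun i => expand1 r m _
    rw [Finset.prod_congr rfl (fun i _ => this i), Finset.prod_univ_sum]
    apply Finset.sum_congr rfl
    intro τ _
    rw [← ee_sum]
    have hsum : ∑ i, Bc (τ i) * ((k:ℝ) * θ i - v i) = (k:ℝ) * μf τ + (- νf τ) := by
      simp only [hμf, hνf, Finset.mul_sum, ← Finset.sum_neg_distrib, ← Finset.sum_add_distrib]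
      exact Finset.sum_congr rfl (fun i _ => by ring)
    rw [hsum, ee_add, ee_nat_mul]
  -- split into good and bad
  set P : (Fin m → ((Fin m → ℕ) × (Fin m → ℕ))) → Prop := fun τ => ∃ z : ℤ, μf τ = (z:ℝ) with hP
  set good := Big.filter P with hgood
  set bad := Big.filter (fun τ => ¬ P τ) with hbad
  set C : ℝ := ∑ τ ∈ bad, 2 / ‖ee (μf τ) - 1‖ with hC
  have hC0 : 0 ≤ C := Finset.sum_nonneg (fun τ _ => by positivity)
  -- for good τ, the ν-phase is trivial
  have hgood_ν : ∀ τ ∈ good, ee (- νf τ) = 1 := by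
    intro τ hτ
    rw [hgood, Finset.mem_filter] at hτ
    obtain ⟨z, hz⟩ := hτ.2
    set b : Fin m → ℤ := fun i => (∑ u, ((τ i).1 u : ℤ)) - ∑ u, ((τ i).2 u : ℤ) with hb
    have hcast : ∀ i, ((b i : ℤ) : ℝ) = Bc (τ i) := by
      intro i; rw [hb, hBc]; push_cast; ring
    have hμθ : ∑ i, (b i : ℝ) * θ i = (z : ℝ) := by
      rw [Finset.sum_congr rfl (fun i _ => by rw [hcast i])]; exact hz
    obtain ⟨z', hz'⟩ := HA b ⟨z, hμθ⟩
    have hν : νf τ = ((z' : ℤ) : ℝ) := by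
      rw [hνf]
      rw [← hz']
      exact Finset.sum_congr rfl (fun i _ => by rw [hcast i])
    rw [hν, show -((z' : ℤ) : ℝ) = (((-z' : ℤ)) : ℝ) by push_cast; ring, ee_int]
  have hgood_μ : ∀ τ ∈ good, ee (μf τ) = 1 := by
    intro τ hτ
    rw [hgood, Finset.mem_filter] at hτ
    obtain ⟨z, hz⟩ := hτ.2
    rw [hz, ee_int]
  have hbad_ne : ∀ τ ∈ bad, ee (μf τ) ≠ 1 := by
    intro τ hτ hone
    rw [hbad, Finset.mem_filter] at hτ
    exact hτ.2 ((ee_eq_one_iff _).mp hone)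
  -- Identity 3
  have Id3 : ∀ K : ℕ, ((∑ j ∈ Finset.range K, F (j+1) : ℝ) : ℂ)
      = ((good.card : ℝ) * K : ℝ) + ∑ τ ∈ bad, ee (- νf τ) * (ee (μf τ) * Dd K (μf τ)) := by
    intro K
    have h1 : ((∑ j ∈ Finset.range K, F (j+1) : ℝ) : ℂ)
        = ∑ τ ∈ Big, ee (- νf τ) * ∑ j ∈ Finset.range K, ee (μf τ) ^ (j+1) := by
      push_cast
      rw [Finset.sum_congr rfl (fun j (_ : j ∈ Finset.range K) => Id2 (j+1))]
      rw [Finset.sum_comm]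
      apply Finset.sum_congr rfl
      intro τ _
      rw [Finset.mul_sum]
      exact Finset.sum_congr rfl (fun j _ => by push_cast; ring)
    rw [h1, ← Finset.sum_filter_add_sum_filter_not Big P]
    congr 1
    · rw [← hgood]
      rw [Finset.sum_congr rfl (fun τ hτ => by
        rw [hgood_ν τ hτ, hgood_μ τ hτ]
        simp : ∀ τ ∈ good, ee (- νf τ) * ∑ j ∈ Finset.range K, ee (μf τ) ^ (j+1) = (K:ℂ))]
      rw [Finset.sum_const]
      push_cast
      ring
    · rw [← hbad]
      apply Finset.sum_congr rfl
      intro τ _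
      congr 1
      rw [Dd, Finset.mul_sum]
      exact Finset.sum_congr rfl (fun j _ => pow_succ' _ _)
  -- lower bound for the Birkhoff-type sums
  have hlow : ∀ K : ℕ, (good.card : ℝ) * K - C ≤ ∑ j ∈ Finset.range K, F (j+1) := by
    intro K
    set S : ℂ := ∑ τ ∈ bad, ee (- νf τ) * (ee (μf τ) * Dd K (μf τ)) with hS
    have h3 : ((∑ j ∈ Finset.range K, F (j+1) - (good.card : ℝ) * K : ℝ) : ℂ) = S := by
      push_cast [Id3 K]
      ring
    have h4 : ∑ j ∈ Finset.range K, F (j+1) - (good.card : ℝ) * K = S.re := by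
      rw [← h3, Complex.ofReal_re]
    have h5 : ‖S‖ ≤ C := by
      rw [hS, hC]
      refine (norm_sum_le _ _).trans (Finset.sum_le_sum ?_)
      intro τ hτ
      rw [norm_mul, norm_mul, ee_norm, ee_norm, one_mul, one_mul]
      exact Dd_norm_le_of_ne K (μf τ) (hbad_ne τ hτ)
    have h6 : -C ≤ S.re := by
      have := Complex.abs_re_le_norm S
      have : |S.re| ≤ ‖S‖ := this
      cases abs_le.mp this with
      | intro hl hr => linarith
    linarith
  -- upper bound
  set Er : ℝ := (1/δ^2)^m * (((r:ℝ)^2)^m)^(m-1) with hEr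
  have hup : ∀ K : ℕ, ∑ j ∈ Finset.range K, F (j+1) ≤ K * Er := by
    intro K
    have hFk : ∀ k : ℕ, 0 < k → F k ≤ Er := by
      intro k hk
      obtain ⟨i₀, hf1, hf2⟩ := HB k hk
      set u : Fin m → ℝ := fun i => (k:ℝ) * θ i - v i with hu
      have hlow2 : 2 * δ ≤ ‖ee (u i₀) - 1‖ := ee_sub_one_lower hδ hf1 hf2
      have hne : ee (u i₀) ≠ 1 := by
        intro hone
        rw [hone] at hlow2
        simp at hlow2
        linarith
      have hnormSq : ∀ t : ℝ, Complex.normSq (Dd r t) = ‖Dd r t‖^2 := by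
        intro t
        rw [← Complex.sq_norm]
      have hfac0 : Complex.normSq (Dd r (u i₀)) ≤ 1/δ^2 := by
        rw [hnormSq]
        have h7 : ‖Dd r (u i₀)‖ ≤ 2 / ‖ee (u i₀) - 1‖ := Dd_norm_le_of_ne r _ hne
        have h8 : 2 / ‖ee (u i₀) - 1‖ ≤ 2 / (2*δ) := by
          apply div_le_div_of_nonneg_left (by norm_num) (by positivity) hlow2
        have h9 : ‖Dd r (u i₀)‖ ≤ 1/δ := by
          rw [show 2/(2*δ) = 1/δ by field_simp] at h8
          linarith
        calc ‖Dd r (u i₀)‖^2 ≤ (1/δ)^2 := by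
              apply pow_le_pow_left₀ (norm_nonneg _) h9
        _ = 1/δ^2 := by field_simp
      have hfacgen : ∀ i : Fin m, Complex.normSq (Dd r (u i)) ≤ (r:ℝ)^2 := by
        intro i
        rw [hnormSq]
        apply pow_le_pow_left₀ (norm_nonneg _) (Dd_norm_le r (u i))
      have hsplit : F k = (Complex.normSq (Dd r (u i₀)))^m *
          ∏ i ∈ Finset.univ.erase i₀, (Complex.normSq (Dd r (u i)))^m := by
        rw [hF]
        exact (Finset.mul_prod_erase Finset.univ _ (Finset.mem_univ i₀)).symm
      rw [hsplit, hEr]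
      apply mul_le_mul
      · exact pow_le_pow_left₀ (Complex.normSq_nonneg _) hfac0 m
      · calc ∏ i ∈ Finset.univ.erase i₀, (Complex.normSq (Dd r (u i)))^m
            ≤ (((r:ℝ)^2)^m) ^ (Finset.univ.erase i₀).card := by
              rw [← Finset.prod_const]
              apply Finset.prod_le_prod
              · intro i _
                exact pow_nonneg (Complex.normSq_nonneg _) m
              · intro i _
                exact pow_le_pow_left₀ (Complex.normSq_nonneg _) (hfacgen i) m
        _ = (((r:ℝ)^2)^m) ^ (m-1) := by
              rw [Finset.card_erase_of_mem (Finset.mem_univ i₀), Finset.card_univ,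
                Fintype.card_fin]
      · exact Finset.prod_nonneg (fun i _ => pow_nonneg (Complex.normSq_nonneg _) m)
      · positivity
    calc ∑ j ∈ Finset.range K, F (j+1) ≤ ∑ _j ∈ Finset.range K, Er :=
          Finset.sum_le_sum (fun j _ => hFk (j+1) (Nat.succ_pos j))
    _ = K * Er := by rw [Finset.sum_const, Finset.card_range, nsmul_eq_mul]
  -- the good set is big
  have hQsub : Fintype.piFinset (fun _ : Fin m => Q) ⊆ good := by
    intro τ hτ
    rw [hgood, Finset.mem_filter]
    constructor
    · rw [hBig]
      exact Fintype.piFinset_subset _ _ (fun i => Finset.filter_subset _ _) hτ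
    · refine ⟨0, ?_⟩
      have hBc0 : ∀ i, Bc (τ i) = 0 := by
        intro i
        have := Fintype.mem_piFinset.mp hτ i
        rw [hQdef, Finset.mem_filter] at this
        have hnat := this.2
        rw [hBc]
        have : ((∑ u, (τ i).1 u : ℕ) : ℝ) = ((∑ u, (τ i).2 u : ℕ) : ℝ) :=
          congrArg (fun x : ℕ => (x : ℝ)) hnat
        push_cast at this
        simp only
        linarith
      rw [hμf]
      simp only
      rw [Finset.sum_congr rfl (fun i _ => by rw [hBc0 i, zero_mul])]
      simp
  have hgoodcard : Q.card ^ m ≤ good.card := by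
    calc Q.card ^ m = (Fintype.piFinset (fun _ : Fin m => Q)).card := by
          rw [Fintype.card_piFinset]; simp
    _ ≤ good.card := Finset.card_le_card hQsub
  -- numerics
  obtain ⟨mm, rfl⟩ : ∃ mm, m = mm + 1 := ⟨m - 1, by omega⟩
  have hQr : ((r:ℝ)) ^ (2*(mm+1)) ≤ ((mm+1:ℕ):ℝ) * r * Q.card := by
    exact_mod_cast count_lower r (mm+1) hr1 (by omega)
  have hrpos : (0:ℝ) < (r:ℝ) := by exact_mod_cast hr1
  have hQpos : (0:ℝ) < (Q.card : ℝ) := by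
    by_contra hcon
    push_neg at hcon
    have h9 := mul_le_mul_of_nonneg_left hcon
      (show (0:ℝ) ≤ ((mm+1:ℕ):ℝ) * r by positivity)
    rw [mul_zero] at h9
    have h10 : ((r:ℝ)) ^ (2*(mm+1)) ≤ 0 := le_trans hQr (by linarith)
    nlinarith [pow_pos hrpos (2*(mm+1))]
  have hkey : ((mm+1:ℕ):ℝ)/δ^2 < (r:ℝ) := hrbig
  have hEgood : Er < (Q.card : ℝ)^(mm+1) := by
    have hQlow : (r:ℝ)^(2*(mm+1)) / (((mm+1:ℕ):ℝ) * r) ≤ (Q.card : ℝ) := by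
      rw [div_le_iff₀ (by positivity)]
      linarith [hQr]
    have hQlow2 : ((r:ℝ)^(2*(mm+1)) / (((mm+1:ℕ):ℝ) * r))^(mm+1) ≤ ((Q.card : ℝ))^(mm+1) :=
      pow_le_pow_left₀ (by positivity) hQlow (mm+1)
    refine lt_of_lt_of_le ?_ hQlow2
    have hEr' : Er = (1/δ^2)^(mm+1) * (((r:ℝ)^2)^(mm+1))^mm := by
      rw [hEr]; norm_num
    have hkey2 : (((mm+1:ℕ):ℝ)/δ^2)^(mm+1) < (r:ℝ)^(mm+1) :=
      pow_lt_pow_left₀ hkey (by positivity) (by omega)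
    have e1 : ((r:ℝ)^(2*(mm+1)))^(mm+1)
        = ((r:ℝ)^(mm+1)) * (((r:ℝ)^2)^(mm+1))^mm * (r:ℝ)^(mm+1) := by
      rw [← pow_mul, ← pow_mul, ← pow_mul, ← pow_add, ← pow_add]
      congr 1
      ring
    have e2 : Er * ((((mm+1:ℕ):ℝ)) * r)^(mm+1)
        = (((mm+1:ℕ):ℝ)/δ^2)^(mm+1) * (((r:ℝ)^2)^(mm+1))^mm * (r:ℝ)^(mm+1) := by
      rw [hEr', mul_pow]
      field_simp
      ring
    have hkey3 : Er * ((((mm+1:ℕ):ℝ)) * r)^(mm+1) < ((r:ℝ)^(2*(mm+1)))^(mm+1) := by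
      calc Er * ((((mm+1:ℕ):ℝ)) * r)^(mm+1)
          = (((mm+1:ℕ):ℝ)/δ^2)^(mm+1) * (((r:ℝ)^2)^(mm+1))^mm * (r:ℝ)^(mm+1) := e2
      _ < ((r:ℝ)^(mm+1)) * (((r:ℝ)^2)^(mm+1))^mm * (r:ℝ)^(mm+1) := by
          apply mul_lt_mul_of_pos_right ?_ (by positivity)
          exact mul_lt_mul_of_pos_right hkey2 (by positivity)
      _ = ((r:ℝ)^(2*(mm+1)))^(mm+1) := e1.symm
    have := (lt_div_iff₀ (show (0:ℝ) < ((((mm+1:ℕ):ℝ)) * r)^(mm+1) by positivity)).mpr hkey3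
    calc Er < ((r:ℝ)^(2*(mm+1)))^(mm+1) / ((((mm+1:ℕ):ℝ)) * r)^(mm+1) := this
    _ = ((r:ℝ)^(2*(mm+1)) / (((mm+1:ℕ):ℝ) * r))^(mm+1) := (div_pow _ _ _).symm
  -- conclusion
  have hdiff : 0 < (good.card : ℝ) - Er := by
    have : (Q.card : ℝ)^(mm+1) ≤ (good.card : ℝ) := by exact_mod_cast hgoodcard
    linarith
  obtain ⟨K, hK⟩ := exists_nat_gt (C / ((good.card : ℝ) - Er))
  have h1 := hlow K
  have h2 := hup K
  have h3 : (K:ℝ) * ((good.card : ℝ) - Er) ≤ C := by nlinarith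
  have h4 : (K:ℝ) ≤ C / ((good.card : ℝ) - Er) := (le_div_iff₀ hdiff).mpr h3
  linarith



/-- Sign part of Theorem 1.1(ii): if the group of resonances of `Δ` modulo `2N`
is generated by a single vector `a₀` with at least one strictly positive
component, then all components of `a₀` are non-negative. -/
theorem stmt_1 (n N m : ℕ) (hn : 0 < n) (hN : n + 1 ≤ N) (hm : 0 < m)
    (Δ : Fin m → ℝ)
    (h : ∀ k : ℕ, 0 < k →
      ∃ i : Fin m, Int.fract ((k : ℝ) * Δ i / (2 * N)) ∈ Set.Icc 0 ((n : ℝ) / N))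
    (a₀ : Fin m → ℤ)
    (hR : {a : Fin m → ℤ | ∃ z : ℤ, ∑ i, (a i : ℝ) * Δ i = 2 * N * z}
        = {a : Fin m → ℤ | ∃ c : ℤ, a = c • a₀})
    (hpos : ∃ i, 0 < a₀ i) :
    ∀ i, 0 ≤ a₀ i := by
  classical
  by_contra hcon
  push_neg at hcon
  obtain ⟨q, hq⟩ := hcon
  obtain ⟨p, hp⟩ := hpos
  have hNpos : (0:ℝ) < N := by
    have : 0 < N := by omega
    exact_mod_cast this
  set β : ℝ := (n:ℝ)/N with hβ
  have hβ0 : 0 ≤ β := by positivity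
  have hβ1 : β < 1 := by
    rw [hβ, div_lt_one hNpos]
    exact_mod_cast (by omega : n < N)
  clear_value β
  set θ : Fin m → ℝ := fun i => Δ i / (2*N) with hθ
  set Sp := Finset.univ.filter (fun i : Fin m => 0 < a₀ i) with hSp
  set Sn := Finset.univ.filter (fun i : Fin m => ¬ 0 < a₀ i) with hSn
  set Pr : ℝ := ∑ i ∈ Sp, (a₀ i : ℝ) with hPr
  set Nr : ℝ := ∑ i ∈ Sn, (-(a₀ i) : ℝ) with hNr
  have hPr1 : 1 ≤ Pr := by
    have hmem : p ∈ Sp := by rw [hSp, Finset.mem_filter]; exact ⟨Finset.mem_univ p, hp⟩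
    calc (1:ℝ) ≤ (a₀ p : ℝ) := by exact_mod_cast hp
    _ ≤ Pr := Finset.single_le_sum (f := fun i => (a₀ i : ℝ))
        (fun i hi => by
          rw [hSp, Finset.mem_filter] at hi
          exact show (0:ℝ) ≤ (a₀ i : ℝ) by exact_mod_cast le_of_lt hi.2) hmem
  have hNr1 : 1 ≤ Nr := by
    have hmem : q ∈ Sn := by
      rw [hSn, Finset.mem_filter]
      exact ⟨Finset.mem_univ q, by omega⟩
    calc (1:ℝ) ≤ (-(a₀ q) : ℝ) := by
          have : 1 ≤ -(a₀ q) := by omega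
          exact_mod_cast this
    _ ≤ Nr := Finset.single_le_sum (f := fun i => (-(a₀ i) : ℝ))
        (fun i hi => by
          rw [hSn, Finset.mem_filter] at hi
          exact show (0:ℝ) ≤ (-(a₀ i) : ℝ) by
            have : (0:ℤ) ≤ -(a₀ i) := by omega
            exact_mod_cast this) hmem
  clear_value Sp Sn
  set δ' : ℝ := (1-β)/(2*(Pr+Nr)) with hδ'
  have hδ'0 : 0 < δ' := by
    rw [hδ']
    apply div_pos (by linarith) (by linarith)
  have hδeq : δ' * (2*(Pr+Nr)) = 1-β := by
    rw [hδ']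
    field_simp
  have hδ'quarter : δ' ≤ 1/4 := by nlinarith
  clear_value δ'
  clear hδ'
  set vlo : ℝ := β - 1 + δ' with hvlo
  set vhi : ℝ := -δ' with hvhi
  have hlohi : vlo ≤ vhi := by rw [hvlo, hvhi]; nlinarith
  set vm : Fin m → ℝ := fun i => if 0 < a₀ i then vlo else vhi with hvm
  set vp : Fin m → ℝ := fun i => if 0 < a₀ i then vhi else vlo with hvp
  set A : ℝ := ∑ i, (a₀ i:ℝ) * vm i with hA
  set B : ℝ := ∑ i, (a₀ i:ℝ) * vp i with hB
  have hAeq : A = Pr * vlo - Nr * vhi := by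
    rw [hA, ← Finset.sum_filter_add_sum_filter_not Finset.univ (fun i : Fin m => 0 < a₀ i)]
    rw [← hSp, ← hSn]
    congr 1
    · rw [hPr, Finset.sum_mul]
      apply Finset.sum_congr rfl
      intro i hi
      rw [hSp, Finset.mem_filter] at hi
      rw [hvm]
      simp only [if_pos hi.2]
    · rw [show -(Nr * vhi) = Nr * (-vhi) by ring, hNr, Finset.sum_mul]
      apply Finset.sum_congr rfl
      intro i hi
      rw [hSn, Finset.mem_filter] at hi
      rw [hvm]
      simp only [if_neg hi.2]
      ring
  have hBeq : B = Pr * vhi - Nr * vlo := by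
    rw [hB, ← Finset.sum_filter_add_sum_filter_not Finset.univ (fun i : Fin m => 0 < a₀ i)]
    rw [← hSp, ← hSn]
    congr 1
    · rw [hPr, Finset.sum_mul]
      apply Finset.sum_congr rfl
      intro i hi
      rw [hSp, Finset.mem_filter] at hi
      rw [hvp]
      simp only [if_pos hi.2]
    · rw [show -(Nr * vlo) = Nr * (-vlo) by ring, hNr, Finset.sum_mul]
      apply Finset.sum_congr rfl
      intro i hi
      rw [hSn, Finset.mem_filter] at hi
      rw [hvp]
      simp only [if_neg hi.2]
      ring
  clear_value Pr Nr vlo vhi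
  have hAneg : A < 0 := by
    rw [hAeq, hvlo, hvhi]
    nlinarith
  have hBpos : 0 < B := by
    rw [hBeq, hvlo, hvhi]
    nlinarith
  clear_value A B
  have hBA : (0:ℝ) < B - A := by linarith
  obtain ⟨ts, hts0, hts1, htseq⟩ : ∃ ts : ℝ, 0 ≤ ts ∧ ts ≤ 1 ∧ A + ts * (B - A) = 0 := by
    refine ⟨(-A)/(B-A), div_nonneg (by linarith) (by linarith), ?_, ?_⟩
    · rw [div_le_one hBA]; linarith
    · field_simp; ring
  set v : Fin m → ℝ := fun i => vm i + ts * (vp i - vm i) with hv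
  have hseg : ∀ c d : ℝ, vlo ≤ c → c ≤ vhi → vlo ≤ d → d ≤ vhi →
      vlo ≤ c + ts * (d - c) ∧ c + ts * (d - c) ≤ vhi := by
    intro c d h1 h2 h3 h4
    have e3 : ts*(d-c) = -(ts*(c-d)) := by ring
    rcases le_total c d with hcd | hcd
    · have e1 : 0 ≤ ts*(d-c) := mul_nonneg hts0 (by linarith)
      have e2 : ts*(d-c) ≤ d-c := mul_le_of_le_one_left (by linarith) hts1
      exact ⟨by linarith, by linarith⟩
    · have e1 : 0 ≤ ts*(c-d) := mul_nonneg hts0 (by linarith)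
      have e2 : ts*(c-d) ≤ c-d := mul_le_of_le_one_left (by linarith) hts1
      exact ⟨by linarith, by linarith⟩
  have hvbound : ∀ i, vlo ≤ v i ∧ v i ≤ vhi := by
    intro i
    have hc : vlo ≤ vm i ∧ vm i ≤ vhi := by
      rw [hvm]; by_cases hi : 0 < a₀ i
      · simp only [if_pos hi]; exact ⟨le_refl _, hlohi⟩
      · simp only [if_neg hi]; exact ⟨hlohi, le_refl _⟩
    have hd : vlo ≤ vp i ∧ vp i ≤ vhi := by
      rw [hvp]; by_cases hi : 0 < a₀ i
      · simp only [if_pos hi]; exact ⟨hlohi, le_refl _⟩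
      · simp only [if_neg hi]; exact ⟨le_refl _, hlohi⟩
    exact hseg (vm i) (vp i) hc.1 hc.2 hd.1 hd.2
  have hav : ∑ i, (a₀ i:ℝ) * v i = 0 := by
    have hterm : ∀ i : Fin m, (a₀ i:ℝ) * v i
        = (a₀ i:ℝ) * vm i + ts * ((a₀ i:ℝ) * vp i - (a₀ i:ℝ) * vm i) := by
      intro i; rw [hv]; ring
    rw [Finset.sum_congr rfl (fun i _ => hterm i), Finset.sum_add_distrib,
      ← Finset.mul_sum, Finset.sum_sub_distrib, ← hA, ← hB]
    exact htseq
  -- apply the core lemma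
  refine absurd (core m hm θ v δ' hδ'0 hδ'quarter ?_ ?_) (fun x => x)
  · -- HA
    rintro b ⟨z, hz⟩
    have h2N : (2*(N:ℝ)) ≠ 0 := by positivity
    have hmem : b ∈ {a : Fin m → ℤ | ∃ z : ℤ, ∑ i, (a i : ℝ) * Δ i = 2 * N * z} := by
      refine ⟨z, ?_⟩
      have : ∑ i, (b i:ℝ) * Δ i = (∑ i, (b i:ℝ) * θ i) * (2*N) := by
        rw [Finset.sum_mul]
        apply Finset.sum_congr rfl
        intro i _
        rw [hθ]
        field_simp
      rw [this, hz]
      ring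
    have hb2 : b ∈ {a : Fin m → ℤ | ∃ c : ℤ, a = c • a₀} := by rw [← hR]; exact hmem
    obtain ⟨c, rfl⟩ := hb2
    refine ⟨0, ?_⟩
    have : ∑ i, (((c • a₀) i : ℤ) : ℝ) * v i = (c:ℝ) * ∑ i, (a₀ i:ℝ) * v i := by
      rw [Finset.mul_sum]
      apply Finset.sum_congr rfl
      intro i _
      simp only [Pi.smul_apply, smul_eq_mul]
      push_cast
      ring
    rw [this, hav, mul_zero]
    norm_num
  · -- HB
    intro k hk
    obtain ⟨i, hi⟩ := h k hk
    obtain ⟨hi0, hi1⟩ := hi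
    refine ⟨i, ?_⟩
    have heq : (k:ℝ) * θ i = (k:ℝ) * Δ i / (2*N) := by rw [hθ]; ring
    have hf2 : Int.fract ((k:ℝ) * θ i) ≤ β := by rw [heq]; exact hi1
    have hf1 : 0 ≤ Int.fract ((k:ℝ) * θ i) := Int.fract_nonneg _
    obtain ⟨hvl, hvh⟩ := hvbound i
    have hkey : Int.fract ((k:ℝ) * θ i - v i) = Int.fract ((k:ℝ) * θ i) - v i := by
      have hdecomp : (k:ℝ) * θ i - v i
          = (Int.fract ((k:ℝ) * θ i) - v i) + (⌊(k:ℝ) * θ i⌋ : ℤ) := by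
        rw [Int.fract]
        push_cast
        ring
      rw [hdecomp, Int.fract_add_intCast]
      apply Int.fract_eq_self.mpr
      constructor
      · rw [hvhi] at hvh; linarith
      · rw [hvlo] at hvl; linarith
    rw [hkey]
    constructor
    · rw [hvhi] at hvh; linarith
    · rw [hvlo] at hvl; linarith
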